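/- For the cycle Cₖ with k ≥ 9, γ_{rI}(Cₖ) ≤ k − 2. -/

import Mathlib

open scoped Classical
open Finset

/-- A restrained Italian dominating function: values in {0,1,2}, every 0-vertex has
neighborhood weight ≥ 2, and every 0-vertex has a 0-neighbor. -/
def IsRIDF {V : Type*} [Fintype V] (G : SimpleGraph V) (f : V → ℕ) : Prop :=
  (∀ v, f v ≤ 2) ∧
  (∀ v, f v = 0 → 2 ≤ ∑ u ∈ Finset.univ.filter (fun u => G.Adj v u), f u) ∧
  (∀ v, f v = 0 → ∃ u, G.Adj v u ∧ f u = 0)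

/-- The restrained Italian domination number. -/
noncomputable def ridNum {V : Type*} [Fintype V] (G : SimpleGraph V) : ℕ :=
  sInf {w | ∃ f : V → ℕ, IsRIDF G f ∧ ∑ v, f v = w}

/-- A restrained dominating set. -/
def IsRDS {V : Type*} [Fintype V] (G : SimpleGraph V) (S : Finset V) : Prop :=
  (∀ v ∉ S, ∃ u ∈ S, G.Adj v u) ∧ (∀ v ∉ S, ∃ u ∉ S, G.Adj v u)

/-- The restrained domination number. -/
noncomputable def rdNum {V : Type*} [Fintype V] (G : SimpleGraph V) : ℕ :=
  sInf {k | ∃ S : Finset V, IsRDS G S ∧ S.card = k}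

def gfun (i : ℕ) : ℕ := if i = 0 ∨ i = 3 ∨ i = 6 ∨ i = 9 then 2 else if i ≤ 9 then 0 else 1

lemma adjh (n : ℕ) (a b : Fin (n+9)) (h : b.val = (a.val + 1) % (n+9)) :
    (SimpleGraph.cycleGraph (n+9)).Adj a b := by
  have h1 : (1 : Fin (n+9)).val = 1 := by
    have : (1 : Fin (n+7+2)).val = 1 := Fin.val_one _
    exact this
  have hv : (a + 1).val = (a.val + 1) % (n+9) := by rw [Fin.val_add, h1]
  have hb : b = a + 1 := Fin.ext (h.trans hv.symm)
  rw [hb]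
  exact SimpleGraph.cycleGraph_adj'.mpr (Or.inr (by rw [add_sub_cancel_left]; exact h1))

lemma key (n : ℕ) : ridNum (SimpleGraph.cycleGraph (n+9)) ≤ n + 7 := by
  set G := SimpleGraph.cycleGraph (n+9) with hG
  set f : Fin (n+9) → ℕ := fun v => gfun v.val with hf
  -- for each zero vertex, there is a 2-neighbor and a 0-neighbor
  have hnbrs : ∀ v : Fin (n+9), f v = 0 →
      ∃ u2 u0, G.Adj v u2 ∧ f u2 = 2 ∧ G.Adj v u0 ∧ f u0 = 0 := by
    intro v hv
    have hval : v.val = 1 ∨ v.val = 2 ∨ v.val = 4 ∨ v.val = 5 ∨ v.val = 7 ∨ v.val = 8 := by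
      simp only [hf, gfun] at hv
      split_ifs at hv with h1 h2 <;> omega
    have hk9 : 9 ≤ n + 9 := by omega
    -- helper to build vertices
    have mk : ∀ m : ℕ, m < 9 → ∃ u : Fin (n+9), u.val = m :=
      fun m hm => ⟨⟨m, by omega⟩, rfl⟩
    rcases hval with h | h | h | h | h | h
    · obtain ⟨u2, hu2⟩ := mk 0 (by omega)
      obtain ⟨u0, hu0⟩ := mk 2 (by omega)
      exact ⟨u2, u0, (adjh n u2 v (by rw [h, hu2, Nat.mod_eq_of_lt (by omega)])).symm,
        by simp only [hf]; rw [hu2]; simp [gfun], adjh n v u0 (by rw [h, hu0, Nat.mod_eq_of_lt (by omega)]), by simp only [hf]; rw [hu0]; simp [gfun]⟩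
    · obtain ⟨u2, hu2⟩ := mk 3 (by omega)
      obtain ⟨u0, hu0⟩ := mk 1 (by omega)
      exact ⟨u2, u0, adjh n v u2 (by rw [h, hu2, Nat.mod_eq_of_lt (by omega)]),
        by simp [hf, gfun, hu2], (adjh n u0 v (by rw [h, hu0, Nat.mod_eq_of_lt (by omega)])).symm,
        by simp only [hf]; rw [hu0]; simp [gfun]⟩
    · obtain ⟨u2, hu2⟩ := mk 3 (by omega)
      obtain ⟨u0, hu0⟩ := mk 5 (by omega)
      exact ⟨u2, u0, (adjh n u2 v (by rw [h, hu2, Nat.mod_eq_of_lt (by omega)])).symm,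
        by simp [hf, gfun, hu2], adjh n v u0 (by rw [h, hu0, Nat.mod_eq_of_lt (by omega)]), by simp only [hf]; rw [hu0]; simp [gfun]⟩
    · obtain ⟨u2, hu2⟩ := mk 6 (by omega)
      obtain ⟨u0, hu0⟩ := mk 4 (by omega)
      exact ⟨u2, u0, adjh n v u2 (by rw [h, hu2, Nat.mod_eq_of_lt (by omega)]),
        by simp [hf, gfun, hu2], (adjh n u0 v (by rw [h, hu0, Nat.mod_eq_of_lt (by omega)])).symm,
        by simp only [hf]; rw [hu0]; simp [gfun]⟩
    · obtain ⟨u2, hu2⟩ := mk 6 (by omega)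
      obtain ⟨u0, hu0⟩ := mk 8 (by omega)
      exact ⟨u2, u0, (adjh n u2 v (by rw [h, hu2, Nat.mod_eq_of_lt (by omega)])).symm,
        by simp [hf, gfun, hu2], adjh n v u0 (by rw [h, hu0, Nat.mod_eq_of_lt (by omega)]), by simp only [hf]; rw [hu0]; simp [gfun]⟩
    · obtain ⟨u0, hu0⟩ := mk 7 (by omega)
      refine ⟨v + 1, u0, ?_, ?_, (adjh n u0 v (by rw [h, hu0, Nat.mod_eq_of_lt (by omega)])).symm,
        by simp only [hf]; rw [hu0]; simp [gfun]⟩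
      · exact adjh n v (v + 1) (by
          have h1 : (1 : Fin (n+9)).val = 1 := by
            have : (1 : Fin (n+7+2)).val = 1 := Fin.val_one _
            exact this
          rw [Fin.val_add, h1])
      · have hv1 : (v + 1).val = 9 % (n + 9) := by
          have h1 : (1 : Fin (n+9)).val = 1 := by
            have : (1 : Fin (n+7+2)).val = 1 := Fin.val_one _
            exact this
          rw [Fin.val_add, h1, h]
        have : (v+1).val = 0 ∨ (v+1).val = 9 := by
          rcases Nat.eq_zero_or_pos n with hn | hn
          · left; rw [hv1, hn]
          · right; rw [hv1]; exact Nat.mod_eq_of_lt (by omega)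
        simp only [hf, gfun]
        rcases this with h' | h' <;> rw [h'] <;> norm_num
  have hridf : IsRIDF G f := by
    refine ⟨fun v => ?_, fun v hv => ?_, fun v hv => ?_⟩
    · simp only [hf, gfun]; split_ifs <;> omega
    · obtain ⟨u2, u0, ha2, hf2, _, _⟩ := hnbrs v hv
      refine le_trans hf2.ge (Finset.single_le_sum (fun i _ => Nat.zero_le _) ?_)
      simp [ha2]
    · obtain ⟨u2, u0, _, _, ha0, hf0⟩ := hnbrs v hv
      exact ⟨u0, ha0, hf0⟩
  have hsum : ∑ v : Fin (n+9), f v ≤ n + 7 := by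
    have : ∑ v : Fin (n+9), f v = ∑ i ∈ Finset.range (n+9), gfun i :=
      Fin.sum_univ_eq_sum_range (fun i => gfun i) (n+9)
    rw [this]
    rcases Nat.eq_zero_or_pos n with hn | hn
    · subst hn
      norm_num [Finset.sum_range_succ, gfun]
    · have hsplit : ∑ i ∈ Finset.Ico 0 10, gfun i + ∑ i ∈ Finset.Ico 10 (n+9), gfun i
          = ∑ i ∈ Finset.Ico 0 (n+9), gfun i :=
        Finset.sum_Ico_consecutive gfun (Nat.zero_le 10) (by omega)
      rw [Finset.range_eq_Ico, ← hsplit]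
      have h1 : ∑ i ∈ Finset.Ico 0 10, gfun i = 8 := by
        rw [← Finset.range_eq_Ico]
        norm_num [Finset.sum_range_succ, gfun]
      have h2 : ∑ i ∈ Finset.Ico 10 (n+9), gfun i = n - 1 := by
        have hone : ∀ i ∈ Finset.Ico 10 (n+9), gfun i = 1 := by
          intro i hi
          rw [Finset.mem_Ico] at hi
          simp only [gfun]
          rw [if_neg (by omega), if_neg (by omega)]
        rw [Finset.sum_congr rfl hone, Finset.sum_const, Nat.card_Ico, smul_eq_mul, mul_one]
        omega
      omega
  calc ridNum G ≤ ∑ v : Fin (n+9), f v := Nat.sInf_le ⟨f, hridf, rfl⟩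
    _ ≤ n + 7 := hsum

theorem stmt18 (k : ℕ) (hk : 9 ≤ k) : ridNum (SimpleGraph.cycleGraph k) ≤ k - 2 := by
  obtain ⟨n, rfl⟩ : ∃ n, k = n + 9 := ⟨k - 9, by omega⟩
  have := key n
  omega
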